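/- Blow-up preserves triangle-freeness of difference graphs: let A be a finite sum-free set of positive integers with max element M, let Q ⊂ ℝ be finite with diameter D, and let C > 2D·(M+2). Define P = ⋃_{i=1}^{n} (Q + iC) and the relation E on P by (x,y) ∈ E iff there exists z ∈ A with | |x-y|/C − z | < 1/1000 and C/2 ≤ |x-y| ≤ (n+1)C. Then the graph (P, E) is triangle-free. -/

import Mathlib

theorem blowup_preserves_triangle_free
    (A : Finset ℕ) (hA0 : ∀ a ∈ A, 1 ≤ a)
    (hsf : ∀ a ∈ A, ∀ b ∈ A, a + b ∉ A)
    (M : ℕ) (hM : ∀ a ∈ A, a ≤ M)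
    (Q : Finset ℝ) (hQ : Q.Nonempty)
    (D : ℝ) (hD : D = Q.max' hQ - Q.min' hQ)
    (C : ℝ) (hC : C > 2 * D * (M + 2))
    (n : ℕ) (hn : 1 ≤ n)
    (P : Finset ℝ)
    (hP : P = (Finset.Icc 1 n).biUnion fun i => Q.image fun q => q + i * C)
    (E : ℝ → ℝ → Prop)
    (hE : ∀ x y, E x y ↔
      (C / 2 ≤ |x - y| ∧ |x - y| ≤ (n + 1) * C ∧
        ∃ z ∈ A, abs (|x - y| / C - (z : ℝ)) < 1 / 1000)) :
    ¬ ∃ x ∈ P, ∃ y ∈ P, ∃ z ∈ P,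
      x ≠ y ∧ y ≠ z ∧ x ≠ z ∧ E x y ∧ E y z ∧ E x z := by
  have hD0 : 0 ≤ D := by
    rw [hD]; linarith [Q.min'_le (Q.max' hQ) (Q.max'_mem hQ)]
  have hC0 : 0 < C := by
    have : (0:ℝ) ≤ 2 * D * (M + 2) := by positivity
    linarith
  have hDC : D / C < 1 / 4 := by
    rw [div_lt_iff₀ hC0]
    nlinarith [mul_nonneg hD0 (Nat.cast_nonneg (α := ℝ) M)]
  have key : ∀ (i j : ℕ) (qi qj : ℝ), qi ∈ Q → qj ∈ Q →
      E (qi + i * C) (qj + j * C) → ((i:ℤ) - j).natAbs ∈ A := by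
    intro i j qi qj hqi hqj he
    rw [hE] at he
    obtain ⟨h1, h2, a, ha, halt⟩ := he
    have hq : |qi - qj| ≤ D := by
      have g1 := Q.min'_le qi hqi
      have g2 := Q.le_max' qi hqi
      have g3 := Q.min'_le qj hqj
      have g4 := Q.le_max' qj hqj
      rw [abs_le]; constructor <;> [linarith [hD]; linarith [hD]]
    set d : ℤ := (i:ℤ) - j with hd
    set X : ℝ := |(qi + i * C) - (qj + j * C)| with hX
    have hsplit : (qi + i * C) - (qj + j * C) = (qi - qj) + (d:ℝ) * C := by
      push_cast [hd]; ring
    have habs : |X - |(d:ℝ)| * C| ≤ D := by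
      have h := abs_abs_sub_abs_le_abs_sub ((qi - qj) + (d:ℝ)*C) ((d:ℝ)*C)
      simp only [add_sub_cancel_right] at h
      have hmc : |(d:ℝ)| * C = |(d:ℝ) * C| := by
        rw [abs_mul, abs_of_pos hC0]
      rw [hX, hsplit, hmc]
      exact le_trans h hq
    have hr : abs (X / C - abs ((d:ℝ))) ≤ D / C := by
      have : X / C - abs ((d:ℝ)) = (X - abs ((d:ℝ)) * C) / C := by field_simp
      rw [this, abs_div, abs_of_pos hC0]
      gcongr
    have hclose : abs (abs ((d:ℝ)) - (a:ℝ)) < 1 := by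
      have := abs_sub_le (abs ((d:ℝ))) (X / C) (a:ℝ)
      have h1 : abs (abs ((d:ℝ)) - X / C) = abs (X / C - abs ((d:ℝ))) := abs_sub_comm _ _
      linarith [halt, hr, hDC, this, h1.le]
    have hcast : abs ((d:ℝ)) = (d.natAbs : ℝ) := by
      push_cast [Nat.cast_natAbs]
      simp
    rw [hcast] at hclose
    have hb := abs_lt.mp hclose
    have hb1 : (a:ℝ) < (d.natAbs:ℝ) + 1 := by linarith [hb.1]
    have hb2 : (d.natAbs:ℝ) < (a:ℝ) + 1 := by linarith [hb.2]
    have hb1' : a < d.natAbs + 1 := by exact_mod_cast hb1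
    have hb2' : d.natAbs < a + 1 := by exact_mod_cast hb2
    have : d.natAbs = a := by omega
    rwa [this]
  rintro ⟨x, hx, y, hy, z, hz, hxy, hyz, hxz, exy, eyz, exz⟩
  rw [hP] at hx hy hz
  simp only [Finset.mem_biUnion, Finset.mem_image, Finset.mem_Icc] at hx hy hz
  obtain ⟨i, hi, qx, hqx, hxe⟩ := hx
  obtain ⟨j, hj, qy, hqy, hye⟩ := hy
  obtain ⟨k, hk, qz, hqz, hze⟩ := hz
  rw [← hxe, ← hye] at exy
  rw [← hye, ← hze] at eyz
  rw [← hxe, ← hze] at exz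
  have ha := key i j qx qy hqx hqy exy
  have hb := key j k qy qz hqy hqz eyz
  have hc := key i k qx qz hqx hqz exz
  have h1 := hA0 _ ha
  have h2 := hA0 _ hb
  have h3 := hA0 _ hc
  have hcase : ((i:ℤ)-j).natAbs = ((j:ℤ)-k).natAbs + ((i:ℤ)-k).natAbs ∨
      ((j:ℤ)-k).natAbs = ((i:ℤ)-j).natAbs + ((i:ℤ)-k).natAbs ∨
      ((i:ℤ)-k).natAbs = ((i:ℤ)-j).natAbs + ((j:ℤ)-k).natAbs := by
    omega
  rcases hcase with h | h | h
  · exact hsf _ hb _ hc (h ▸ ha)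
  · exact hsf _ ha _ hc (h ▸ hb)
  · exact hsf _ ha _ hb (h ▸ hc)
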